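/- Let 1 ≤ q < 3, β > 0, and set q₁ = z(q) = (1+q)/(3−q) and β*(q) = (3−q) / (8 β^{2−q} C_q^{2(q−1)}). Then for all ξ ∈ ℝ, F_q[G_q(β; ·)](ξ) = e_{q₁}^{ −β*(q) ξ² }, and β*(q) > 0. -/

import Mathlib

open MeasureTheory Filter Real Topology

/-- The `q`-exponential `e_q^x = [1 + (1-q)x]_+^{1/(1-q)}` (with `e_1^x = e^x`). -/
noncomputable def qExp (q x : ℝ) : ℝ :=
  if q = 1 then Real.exp x else (max (1 + (1 - q) * x) 0) ^ (1 / (1 - q))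

/-- The `q`-exponential of a complex argument, via the principal power. -/
noncomputable def qExpC (q : ℝ) (w : ℂ) : ℂ :=
  if q = 1 then Complex.exp w else (1 + (1 - (q : ℂ)) * w) ^ ((1 : ℂ) / (1 - (q : ℂ)))

/-- The `q`-product on complex numbers, via principal powers. -/
noncomputable def qProdC (q : ℝ) (x y : ℂ) : ℂ :=
  if q = 1 then x * y
  else (x ^ ((1 : ℂ) - (q : ℂ)) + y ^ ((1 : ℂ) - (q : ℂ)) - 1) ^ ((1 : ℂ) / (1 - (q : ℂ)))

/-- The normalizing constant `C_q = ∫ e_q^{-x²} dx`. -/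
noncomputable def qC (q : ℝ) : ℝ := ∫ x : ℝ, qExp q (-x ^ 2)

/-- The `q`-Gaussian `G_q(β; x) = (√β / C_q) e_q^{-βx²}`. -/
noncomputable def qGaussian (q β x : ℝ) : ℝ := (Real.sqrt β / qC q) * qExp q (-(β * x ^ 2))

/-- The `q`-Fourier transform `F_q[f](ξ) = ∫ f(x) e_q^{i x ξ f(x)^{q-1}} dx`. -/
noncomputable def qFourier (q : ℝ) (f : ℝ → ℝ) (ξ : ℝ) : ℂ :=
  ∫ x : ℝ, (f x : ℂ) * qExpC q (Complex.I * (x : ℂ) * (ξ : ℂ) * ((f x ^ (q - 1) : ℝ) : ℂ))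

/-- The `q`-mean `μ_q(f) = ∫ x f(x)^q dx / ∫ f(x)^q dx`. -/
noncomputable def qMean (q : ℝ) (f : ℝ → ℝ) : ℝ :=
  (∫ x : ℝ, x * f x ^ q) / (∫ x : ℝ, f x ^ q)

/-- The `q`-variance `σ_q²(f) = ∫ (x-μ_q(f))² f(x)^q dx / ∫ f(x)^q dx`. -/
noncomputable def qVar (q : ℝ) (f : ℝ → ℝ) : ℝ :=
  (∫ x : ℝ, (x - qMean q f) ^ 2 * f x ^ q) / (∫ x : ℝ, f x ^ q)

/-- Iterated `q`-product `w ⊗_q ⋯ ⊗_q w` (`N` factors). -/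
noncomputable def qProdPow (q : ℝ) (w : ℂ) : ℕ → ℂ
  | 0 => 1
  | 1 => w
  | n + 2 => qProdC q w (qProdPow q w (n + 1))

/-- `z(s) = (1+s)/(3-s)`. -/
noncomputable def zmap (s : ℝ) : ℝ := (1 + s) / (3 - s)

/-- The inverse of `z`: `z⁻¹(t) = (3t-1)/(1+t)`. -/
noncomputable def zinvmap (t : ℝ) : ℝ := (3 * t - 1) / (1 + t)


lemma aux_norm_cpow_le {w : ℂ} {m s : ℝ} (hm : 0 < m) (hre : m ≤ w.re) (hs : s ≤ 0) :
    ‖w ^ (s : ℂ)‖ ≤ m ^ s := by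
  have hw : w ≠ 0 := by
    intro h; rw [h] at hre; simp at hre; linarith
  have h1 : ‖w ^ (s : ℂ)‖ = ‖w‖ ^ s := by
    rw [Complex.norm_cpow_of_ne_zero hw]
    simp
  rw [h1]
  exact Real.rpow_le_rpow_of_nonpos hm (hre.trans (Complex.re_le_norm w)) hs

lemma aux_integrable_rpow {A ε s : ℝ} (hA : 0 < A) (hε : 0 < ε) (hs : 1 < 2 * s) :
    Integrable (fun x : ℝ => (ε + A * x ^ 2) ^ (-s)) := by
  have hs0 : 0 < s := by linarith
  have hpos : ∀ x : ℝ, 0 < ε + A * x ^ 2 := fun x => by positivity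
  set K : ℝ := 2 / ε + 2 / A with hKdef
  have hK0 : 0 < K := by positivity
  have hcont : Continuous (fun x : ℝ => (ε + A * x ^ 2) ^ (-s)) := by
    apply Continuous.rpow_const (by continuity)
    intro x; exact Or.inl (hpos x).ne'
  have hbig : Integrable (fun x : ℝ => K ^ s * (1 + |x|) ^ (-(2 * s))) := by
    have := (integrable_one_add_norm (E := ℝ) (μ := volume) (r := 2 * s)
      (by simpa using hs)).const_mul (K ^ s)
    simpa [Real.norm_eq_abs] using this
  refine hbig.mono hcont.aestronglyMeasurable (Filter.Eventually.of_forall fun x => ?_)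
  have h1x : (0:ℝ) < 1 + |x| := by positivity
  have hkey : (1 + |x|) ^ (2:ℕ) ≤ K * (ε + A * x ^ 2) := by
    have h2 : 2 * |x| ≤ 1 + x ^ 2 := by nlinarith [sq_abs x, sq_nonneg (|x| - 1)]
    have hKε : 2 ≤ K * ε := by
      rw [hKdef]; rw [add_mul]
      have : 2 / ε * ε = 2 := div_mul_cancel₀ 2 hε.ne'
      nlinarith [mul_pos (div_pos two_pos hA) hε]
    have hKA : 2 * x ^ 2 ≤ K * (A * x ^ 2) := by
      rw [hKdef]
      have : 2 / A * A = 2 := div_mul_cancel₀ 2 hA.ne'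
      nlinarith [mul_nonneg (div_pos two_pos hε).le (mul_nonneg hA.le (sq_nonneg x)),
        sq_nonneg x]
    have : (1 + |x|) ^ (2:ℕ) = 1 + 2 * |x| + x ^ 2 := by rw [add_sq]; rw [sq_abs]; ring
    rw [this, mul_add]
    nlinarith
  have hle : (ε + A * x ^ 2) ^ (-s) ≤ K ^ s * (1 + |x|) ^ (-(2 * s)) := by
    have h3 : (1 + |x|) ^ ((2:ℝ)) / K ≤ ε + A * x ^ 2 := by
      rw [div_le_iff₀ hK0]
      calc (1 + |x|) ^ ((2:ℝ)) = (1 + |x|) ^ (2:ℕ) := by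
            rw [← Real.rpow_natCast (1 + |x|) 2]; norm_num
        _ ≤ K * (ε + A * x ^ 2) := hkey
        _ = (ε + A * x ^ 2) * K := by ring
    have h4 : (ε + A * x ^ 2) ^ (-s) ≤ ((1 + |x|) ^ ((2:ℝ)) / K) ^ (-s) := by
      apply Real.rpow_le_rpow_of_nonpos _ h3 (by linarith)
      positivity
    refine h4.trans_eq ?_
    rw [Real.div_rpow (by positivity) hK0.le, ← Real.rpow_mul h1x.le,
      Real.rpow_neg hK0.le s, div_inv_eq_mul]
    rw [mul_comm]
    congr 1
    ring
  have hn1 : ‖(ε + A * x ^ 2) ^ (-s)‖ = (ε + A * x ^ 2) ^ (-s) := by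
    rw [Real.norm_eq_abs, abs_of_pos (Real.rpow_pos_of_pos (hpos x) _)]
  have hn2 : K ^ s * (1 + |x|) ^ (-(2 * s)) ≤ ‖K ^ s * (1 + |x|) ^ (-(2 * s))‖ :=
    le_abs_self _
  rw [hn1]
  exact hle.trans hn2

lemma aux_integrable_rpow' {A ε s C : ℝ} (hA : 0 < A) (hε : 0 < ε) (hs : 1 < s) (hC : 0 ≤ C) :
    Integrable (fun x : ℝ => (|x| + C) * (ε + A * x ^ 2) ^ (-s)) := by
  have hpos : ∀ x : ℝ, 0 < ε + A * x ^ 2 := fun x => by positivity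
  have hcont : Continuous (fun x : ℝ => (|x| + C) * (ε + A * x ^ 2) ^ (-s)) := by
    apply Continuous.mul (by continuity)
    apply Continuous.rpow_const (by continuity)
    intro x; exact Or.inl (hpos x).ne'
  have hint1 : Integrable (fun x : ℝ => (Real.sqrt A)⁻¹ * (ε + A * x ^ 2) ^ (-(s - 1/2))) :=
    (aux_integrable_rpow hA hε (by linarith)).const_mul _
  have hint2 : Integrable (fun x : ℝ => C * (ε + A * x ^ 2) ^ (-s)) :=
    (aux_integrable_rpow hA hε (by linarith)).const_mul _
  refine (hint1.add hint2).mono hcont.aestronglyMeasurable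
    (Filter.Eventually.of_forall fun x => ?_)
  have hA' : 0 < Real.sqrt A := Real.sqrt_pos.2 hA
  have hxb : |x| ≤ (Real.sqrt A)⁻¹ * (ε + A * x ^ 2) ^ ((1:ℝ)/2) := by
    have h1 : x ^ 2 ≤ (ε + A * x ^ 2) / A := by
      rw [le_div_iff₀ hA]; nlinarith [sq_nonneg x]
    have h2 : |x| ≤ Real.sqrt ((ε + A * x ^ 2) / A) := by
      rw [← Real.sqrt_sq_eq_abs]
      exact Real.sqrt_le_sqrt h1
    calc |x| ≤ Real.sqrt ((ε + A * x ^ 2) / A) := h2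
      _ = Real.sqrt (ε + A * x ^ 2) / Real.sqrt A := Real.sqrt_div (hpos x).le A
      _ = (Real.sqrt A)⁻¹ * (ε + A * x ^ 2) ^ ((1:ℝ)/2) := by
          rw [Real.sqrt_eq_rpow]; ring
  have hrp : 0 < (ε + A * x ^ 2) ^ (-s) := Real.rpow_pos_of_pos (hpos x) _
  have hmain : (|x| + C) * (ε + A * x ^ 2) ^ (-s)
      ≤ (Real.sqrt A)⁻¹ * (ε + A * x ^ 2) ^ (-(s - 1/2)) + C * (ε + A * x ^ 2) ^ (-s) := by
    have h3 : (ε + A * x ^ 2) ^ ((1:ℝ)/2) * (ε + A * x ^ 2) ^ (-s)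
        = (ε + A * x ^ 2) ^ (-(s - 1/2)) := by
      rw [← Real.rpow_add (hpos x)]; congr 1; ring
    have h4 : (|x| + C) * (ε + A * x ^ 2) ^ (-s)
        ≤ ((Real.sqrt A)⁻¹ * (ε + A * x ^ 2) ^ ((1:ℝ)/2) + C) * (ε + A * x ^ 2) ^ (-s) := by
      apply mul_le_mul_of_nonneg_right _ hrp.le
      linarith
    calc (|x| + C) * (ε + A * x ^ 2) ^ (-s)
        ≤ ((Real.sqrt A)⁻¹ * (ε + A * x ^ 2) ^ ((1:ℝ)/2) + C) * (ε + A * x ^ 2) ^ (-s) := h4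
      _ = (Real.sqrt A)⁻¹ * ((ε + A * x ^ 2) ^ ((1:ℝ)/2) * (ε + A * x ^ 2) ^ (-s))
          + C * (ε + A * x ^ 2) ^ (-s) := by ring
      _ = (Real.sqrt A)⁻¹ * (ε + A * x ^ 2) ^ (-(s - 1/2)) + C * (ε + A * x ^ 2) ^ (-s) := by
          rw [h3]
  have hn1 : ‖(|x| + C) * (ε + A * x ^ 2) ^ (-s)‖ = (|x| + C) * (ε + A * x ^ 2) ^ (-s) := by
    rw [Real.norm_eq_abs, abs_of_nonneg]
    positivity
  rw [hn1]
  exact hmain.trans (le_abs_self _)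

lemma aux_ofReal_mul_cpow {a : ℝ} (ha : 0 < a) {z : ℂ} (hz : z ≠ 0) (s : ℂ) :
    ((a : ℂ) * z) ^ s = (a : ℂ) ^ s * z ^ s := by
  have ha' : (a : ℂ) ≠ 0 := Complex.ofReal_ne_zero.2 ha.ne'
  have haz : (a : ℂ) * z ≠ 0 := mul_ne_zero ha' hz
  rw [Complex.cpow_def_of_ne_zero haz, Complex.cpow_def_of_ne_zero ha',
    Complex.cpow_def_of_ne_zero hz, Complex.log_ofReal_mul ha hz, ← Complex.exp_add,
    ← Complex.ofReal_log ha.le]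
  ring_nf

set_option maxHeartbeats 2000000 in
open Complex in
lemma aux_shift {A D p : ℝ} (hA : 0 < A) (hD : 0 < D) (hp : 1 < 2 * p) (μ : ℝ)
    (hμ : A * μ ^ 2 < D) :
    ∫ x : ℝ, ((D : ℂ) + (A : ℂ) * ((x : ℂ) - (μ : ℂ) * Complex.I) ^ 2) ^ (-(p : ℂ))
      = ∫ x : ℝ, ((D : ℂ) + (A : ℂ) * (x : ℂ) ^ 2) ^ (-(p : ℂ)) := by
  rcases eq_or_ne μ 0 with hμ0 | hμ0
  · simp [hμ0]
  have hp0 : 0 < p := by linarith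
  have hAμ : 0 < A * μ ^ 2 := by positivity
  set T : ℝ := Real.sqrt ((D / (A * μ ^ 2) + 1) / 2) with hTdef
  set ε : ℝ := (D - A * μ ^ 2) / 2 with hεdef
  have hε : 0 < ε := by rw [hεdef]; linarith
  have hT2 : T ^ 2 = (D / (A * μ ^ 2) + 1) / 2 := by
    rw [hTdef, Real.sq_sqrt]
    have : 1 < D / (A * μ ^ 2) := (one_lt_div hAμ).2 hμ
    linarith
  have hT1 : 1 < T := by
    have h1 : 1 < D / (A * μ ^ 2) := (one_lt_div hAμ).2 hμ
    nlinarith [Real.sqrt_nonneg ((D / (A * μ ^ 2) + 1) / 2)]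
  have hTμ : A * μ ^ 2 * T ^ 2 = (D + A * μ ^ 2) / 2 := by
    rw [hT2]; field_simp
  -- the family of integrands
  set F : ℝ → ℝ → ℂ := fun t x =>
    ((D : ℂ) + (A : ℂ) * ((x : ℂ) - (t : ℂ) * (μ : ℂ) * Complex.I) ^ 2) ^ (-(p : ℂ)) with hF
  set B : ℝ → ℝ → ℂ := fun t x =>
    (D : ℂ) + (A : ℂ) * ((x : ℂ) - (t : ℂ) * (μ : ℂ) * Complex.I) ^ 2 with hB
  have hBre : ∀ t x : ℝ, (B t x).re = D + A * x ^ 2 - A * (t * μ) ^ 2 := by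
    intro t x
    simp [hB, Complex.add_re, Complex.mul_re, Complex.mul_im, pow_two, Complex.sub_re,
      Complex.sub_im]
    ring
  have hrelb : ∀ t ∈ Set.Ioo (-T) T, ∀ x : ℝ, ε + A * x ^ 2 ≤ (B t x).re := by
    intro t ht x
    rw [hBre]
    have ht2 : t ^ 2 ≤ T ^ 2 := by
      rcases ht with ⟨h1, h2⟩
      nlinarith
    have : A * (t * μ) ^ 2 ≤ A * μ ^ 2 * T ^ 2 := by nlinarith [sq_nonneg μ]
    rw [hεdef]
    nlinarith
  have hBpos : ∀ t ∈ Set.Ioo (-T) T, ∀ x : ℝ, 0 < (B t x).re := by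
    intro t ht x
    have := hrelb t ht x
    nlinarith [sq_nonneg x]
  have hslit : ∀ t ∈ Set.Ioo (-T) T, ∀ x : ℝ, B t x ∈ Complex.slitPlane := by
    intro t ht x
    exact Complex.mem_slitPlane_iff.2 (Or.inl (hBpos t ht x))
  have hεA : ∀ x : ℝ, 0 < ε + A * x ^ 2 := fun x => by positivity
  -- norm bound for F
  have hnormF : ∀ t ∈ Set.Ioo (-T) T, ∀ x : ℝ, ‖F t x‖ ≤ (ε + A * x ^ 2) ^ (-p) := by
    intro t ht x
    have : (-(p : ℂ)) = ((-p : ℝ) : ℂ) := by push_cast; ring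
    rw [hF]
    simp only
    rw [this]
    exact aux_norm_cpow_le (hεA x) (hrelb t ht x) (by linarith)
  -- derivative in t
  set F' : ℝ → ℝ → ℂ := fun t x =>
    (-(p : ℂ)) * (B t x) ^ (-(p : ℂ) - 1) *
      ((A : ℂ) * (2 * ((x : ℂ) - (t : ℂ) * (μ : ℂ) * Complex.I)) * (-((μ : ℂ) * Complex.I)))
    with hF'
  have hderivF : ∀ t ∈ Set.Ioo (-T) T, ∀ x : ℝ,
      HasDerivAt (fun t : ℝ => F t x) (F' t x) t := by
    intro t ht x
    have h1 : HasDerivAt (fun w : ℂ => (x : ℂ) - w * (μ : ℂ) * Complex.I)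
        (-((μ : ℂ) * Complex.I)) (t : ℂ) := by
      have := ((hasDerivAt_id ((t : ℝ) : ℂ)).mul_const ((μ : ℂ) * Complex.I)).const_sub (x : ℂ)
      simpa [mul_assoc] using this
    have h2 := ((h1.pow 2).const_mul (A : ℂ)).const_add (D : ℂ)
    have h3 := h2.cpow_const (c := -(p : ℂ)) (hslit t ht x)
    have h4 := h3.comp_ofReal
    convert h4 using 1
    · rfl
    rw [hF', hB]
    simp only [Pi.pow_apply]
    ring
  -- norm bound for F'
  have hnormF' : ∀ t ∈ Set.Ioo (-T) T, ∀ x : ℝ,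
      ‖F' t x‖ ≤ p * ((|x| + T * |μ|) * (ε + A * x ^ 2) ^ (-(p + 1))) * (2 * A * |μ|) := by
    intro t ht x
    rw [hF']
    simp only
    rw [norm_mul, norm_mul]
    have e1 : ‖(-(p : ℂ))‖ = p := by
      simp [abs_of_pos hp0]
    have e2 : ‖(B t x) ^ (-(p : ℂ) - 1)‖ ≤ (ε + A * x ^ 2) ^ (-(p + 1)) := by
      have : (-(p : ℂ) - 1) = ((-(p + 1) : ℝ) : ℂ) := by push_cast; ring
      rw [this]
      exact aux_norm_cpow_le (hεA x) (hrelb t ht x) (by linarith)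
    have e3 : ‖(A : ℂ) * (2 * ((x : ℂ) - (t : ℂ) * (μ : ℂ) * Complex.I)) *
        (-((μ : ℂ) * Complex.I))‖ ≤ A * (2 * (|x| + T * |μ|)) * |μ| := by
      rw [norm_mul, norm_mul, norm_mul, norm_neg, norm_mul]
      have n1 : ‖(A : ℂ)‖ = A := by simp [abs_of_pos hA]
      have n2 : ‖(μ : ℂ)‖ = |μ| := by simp [Real.norm_eq_abs]
      have n3 : ‖Complex.I‖ = 1 := by simp
      have n4 : ‖(x : ℂ) - (t : ℂ) * (μ : ℂ) * Complex.I‖ ≤ |x| + T * |μ| := by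
        refine (norm_sub_le _ _).trans ?_
        rw [norm_mul, norm_mul, n3]
        have : ‖(x : ℂ)‖ = |x| := by simp [Real.norm_eq_abs]
        rw [this]
        have : ‖(t : ℂ)‖ = |t| := by simp [Real.norm_eq_abs]
        rw [this, n2]
        have htT : |t| ≤ T := by
          rcases ht with ⟨h1, h2⟩
          rw [abs_le]; constructor <;> linarith
        nlinarith [abs_nonneg μ, abs_nonneg t]
      rw [n1, n2, n3]
      have h2' : ‖(2 : ℂ)‖ = 2 := by norm_num
      rw [h2']
      nlinarith [mul_le_mul_of_nonneg_right (mul_le_mul_of_nonneg_left n4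
        (by positivity : (0:ℝ) ≤ A * 2)) (abs_nonneg μ)]
    calc ‖(-(p:ℂ))‖ * ‖(B t x) ^ (-(p:ℂ) - 1)‖ * ‖(A : ℂ) * (2 * ((x : ℂ) - (t : ℂ) * (μ : ℂ) *
          Complex.I)) * (-((μ : ℂ) * Complex.I))‖
        ≤ p * (ε + A * x ^ 2) ^ (-(p + 1)) * (A * (2 * (|x| + T * |μ|)) * |μ|) := by
          rw [e1]
          have hb1 : (0:ℝ) ≤ p := hp0.le
          apply mul_le_mul
          · exact mul_le_mul_of_nonneg_left e2 hb1
          · exact e3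
          · positivity
          · positivity
      _ = p * ((|x| + T * |μ|) * (ε + A * x ^ 2) ^ (-(p + 1))) * (2 * A * |μ|) := by ring
  -- continuity
  have hcontB : ∀ t : ℝ, Continuous (fun x : ℝ => B t x) := by
    intro t
    rw [hB]
    exact continuous_const.add (continuous_const.mul
      (((Complex.continuous_ofReal).sub continuous_const).pow 2))
  have hcontF : ∀ t ∈ Set.Ioo (-T) T, Continuous (fun x : ℝ => F t x) := by
    intro t ht
    exact Continuous.cpow (hcontB t) continuous_const (fun x => hslit t ht x)
  have hcontF' : ∀ t ∈ Set.Ioo (-T) T, Continuous (fun x : ℝ => F' t x) := by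
    intro t ht
    rw [hF']
    apply Continuous.mul
    · exact continuous_const.mul
        (Continuous.cpow (hcontB t) continuous_const (fun x => hslit t ht x))
    · exact (continuous_const.mul (continuous_const.mul
        ((Complex.continuous_ofReal).sub continuous_const))).mul continuous_const
  have hintF : ∀ t ∈ Set.Ioo (-T) T, Integrable (fun x : ℝ => F t x) := by
    intro t ht
    refine (aux_integrable_rpow hA hε hp).mono (hcontF t ht).aestronglyMeasurable
      (Filter.Eventually.of_forall fun x => ?_)
    rw [Real.norm_eq_abs]
    exact (hnormF t ht x).trans (le_abs_self _)
  -- the bound function for F'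
  set bnd : ℝ → ℝ := fun x =>
    p * ((|x| + T * |μ|) * (ε + A * x ^ 2) ^ (-(p + 1))) * (2 * A * |μ|) with hbnd
  have hbnd_int : Integrable bnd := by
    have := ((aux_integrable_rpow' hA hε (s := p + 1) (C := T * |μ|) (by linarith)
      (by positivity)).const_mul p).mul_const (2 * A * |μ|)
    convert this using 2 with x
  -- derivative of the integral
  have hIcc : ∀ t₀ ∈ Set.Icc (0:ℝ) 1,
      HasDerivAt (fun t => ∫ x : ℝ, F t x) (∫ x : ℝ, F' t₀ x) t₀ := by
    intro t₀ ht₀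
    have ht₀mem : t₀ ∈ Set.Ioo (-T) T := ⟨by linarith [ht₀.1], by linarith [ht₀.2]⟩
    have hball : Metric.ball t₀ (T - 1) ⊆ Set.Ioo (-T) T := by
      intro t htb
      rw [Metric.mem_ball, Real.dist_eq, abs_lt] at htb
      exact ⟨by linarith [ht₀.1, htb.1], by linarith [ht₀.2, htb.2]⟩
    have key := hasDerivAt_integral_of_dominated_loc_of_deriv_le (F := F) (F' := F')
      (x₀ := t₀) (bound := bnd) (s := Metric.ball t₀ (T - 1)) (Metric.ball_mem_nhds t₀ (by linarith))
      (Filter.eventually_of_mem (Ioo_mem_nhds ht₀mem.1 ht₀mem.2)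
        (fun t htm => (hcontF t htm).aestronglyMeasurable))
      (hintF t₀ ht₀mem)
      ((hcontF' t₀ ht₀mem).aestronglyMeasurable)
      (Filter.Eventually.of_forall fun x => fun t htb => hnormF' t (hball htb) x)
      hbnd_int
      (Filter.Eventually.of_forall fun x => fun t htb => hderivF t (hball htb) x)
    exact key.2
  -- the derivative vanishes
  have hzero : ∀ t ∈ Set.Ioo (-T) T, (∫ x : ℝ, F' t x) = 0 := by
    intro t ht
    set H' : ℝ → ℂ := fun x =>
      (-(p : ℂ)) * (B t x) ^ (-(p : ℂ) - 1) *
        ((A : ℂ) * (2 * ((x : ℂ) - (t : ℂ) * (μ : ℂ) * Complex.I))) with hH'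
    have hF'eq : ∀ x : ℝ, F' t x = (-((μ : ℂ) * Complex.I)) * H' x := by
      intro x
      rw [hF', hH']
      simp only
      ring
    have hHd : ∀ x : ℝ, HasDerivAt (fun x : ℝ => F t x) (H' x) x := by
      intro x
      have h1 : HasDerivAt (fun w : ℂ => w - (t : ℂ) * (μ : ℂ) * Complex.I) 1 (x : ℂ) :=
        (hasDerivAt_id _).sub_const _
      have h2 := ((h1.pow 2).const_mul (A : ℂ)).const_add (D : ℂ)
      have h3 := h2.cpow_const (c := -(p : ℂ)) (hslit t ht x)
      have h4 := h3.comp_ofReal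
      convert h4 using 1
      · rfl
      rw [hH', hB]
      simp only [Pi.pow_apply]
      ring
    have htend_top : Tendsto (fun x : ℝ => F t x) atTop (𝓝 0) := by
      apply squeeze_zero_norm (fun x => hnormF t ht x)
      have h5 : Tendsto (fun x : ℝ => ε + A * x ^ 2) atTop atTop :=
        tendsto_atTop_add_const_left _ ε
          ((tendsto_pow_atTop two_ne_zero).const_mul_atTop hA)
      exact (tendsto_rpow_neg_atTop hp0).comp h5
    have htend_bot : Tendsto (fun x : ℝ => F t x) atBot (𝓝 0) := by
      apply squeeze_zero_norm (fun x => hnormF t ht x)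
      have hsq : Tendsto (fun x : ℝ => x ^ 2) atBot atTop := by
        have := (tendsto_pow_atTop (n := 2) two_ne_zero).comp (tendsto_abs_atBot_atTop (G := ℝ))
        exact this.congr fun x => sq_abs x
      have h5 : Tendsto (fun x : ℝ => ε + A * x ^ 2) atBot atTop :=
        tendsto_atTop_add_const_left _ ε (hsq.const_mul_atTop hA)
      exact (tendsto_rpow_neg_atTop hp0).comp h5
    have hnormH' : ∀ x : ℝ,
        ‖H' x‖ ≤ p * ((|x| + T * |μ|) * (ε + A * x ^ 2) ^ (-(p + 1))) * (2 * A) := by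
      intro x
      rw [hH']
      simp only
      rw [norm_mul, norm_mul]
      have e1 : ‖(-(p : ℂ))‖ = p := by simp [abs_of_pos hp0]
      have e2 : ‖(B t x) ^ (-(p : ℂ) - 1)‖ ≤ (ε + A * x ^ 2) ^ (-(p + 1)) := by
        have : (-(p : ℂ) - 1) = ((-(p + 1) : ℝ) : ℂ) := by push_cast; ring
        rw [this]
        exact aux_norm_cpow_le (hεA x) (hrelb t ht x) (by linarith)
      have e3 : ‖(A : ℂ) * (2 * ((x : ℂ) - (t : ℂ) * (μ : ℂ) * Complex.I))‖
          ≤ A * (2 * (|x| + T * |μ|)) := by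
        rw [norm_mul, norm_mul]
        have n1 : ‖(A : ℂ)‖ = A := by simp [abs_of_pos hA]
        have n2 : ‖(2 : ℂ)‖ = 2 := by norm_num
        have n4 : ‖(x : ℂ) - (t : ℂ) * (μ : ℂ) * Complex.I‖ ≤ |x| + T * |μ| := by
          refine (norm_sub_le _ _).trans ?_
          rw [norm_mul, norm_mul]
          have m1 : ‖(x : ℂ)‖ = |x| := by simp [Real.norm_eq_abs]
          have m2 : ‖(t : ℂ)‖ = |t| := by simp [Real.norm_eq_abs]
          have m3 : ‖(μ : ℂ)‖ = |μ| := by simp [Real.norm_eq_abs]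
          have m4 : ‖Complex.I‖ = 1 := by simp
          rw [m1, m2, m3, m4]
          have htT : |t| ≤ T := by
            rcases ht with ⟨ha, hb⟩
            rw [abs_le]; constructor <;> linarith
          nlinarith [abs_nonneg μ, abs_nonneg t]
        rw [n1, n2]
        nlinarith [mul_le_mul_of_nonneg_left n4 (by positivity : (0:ℝ) ≤ A * 2)]
      calc ‖(-(p:ℂ))‖ * ‖(B t x) ^ (-(p:ℂ) - 1)‖ *
            ‖(A : ℂ) * (2 * ((x : ℂ) - (t : ℂ) * (μ : ℂ) * Complex.I))‖
          ≤ p * (ε + A * x ^ 2) ^ (-(p + 1)) * (A * (2 * (|x| + T * |μ|))) := by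
            rw [e1]
            apply mul_le_mul
            · exact mul_le_mul_of_nonneg_left e2 hp0.le
            · exact e3
            · positivity
            · positivity
        _ = p * ((|x| + T * |μ|) * (ε + A * x ^ 2) ^ (-(p + 1))) * (2 * A) := by ring
    have hH'cont : Continuous H' := by
      rw [hH']
      apply Continuous.mul
      · exact continuous_const.mul
          (Continuous.cpow (hcontB t) continuous_const (fun x => hslit t ht x))
      · exact continuous_const.mul (continuous_const.mul
          ((Complex.continuous_ofReal).sub continuous_const))
    have hH'int : Integrable H' := by
      have hb := ((aux_integrable_rpow' hA hε (s := p + 1) (C := T * |μ|) (by linarith)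
        (by positivity)).const_mul p).mul_const (2 * A)
      refine hb.mono hH'cont.aestronglyMeasurable (Filter.Eventually.of_forall fun x => ?_)
      rw [Real.norm_eq_abs (p * ((|x| + T * |μ|) * (ε + A * x ^ 2) ^ (-(p + 1))) * (2 * A))]
      exact (hnormH' x).trans (le_abs_self _)
    have hIoi : ∫ x in Set.Ioi (0:ℝ), H' x = 0 - F t 0 :=
      integral_Ioi_of_hasDerivAt_of_tendsto' (fun x _ => hHd x)
        hH'int.integrableOn htend_top
    have hIic : ∫ x in Set.Iic (0:ℝ), H' x = F t 0 - 0 :=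
      integral_Iic_of_hasDerivAt_of_tendsto' (fun x _ => hHd x)
        hH'int.integrableOn htend_bot
    have hsum := intervalIntegral.integral_Iic_add_Ioi (b := (0:ℝ)) (f := H')
      hH'int.integrableOn hH'int.integrableOn
    have hHzero : ∫ x : ℝ, H' x = 0 := by
      rw [← hsum, hIic, hIoi]; ring
    calc (∫ x : ℝ, F' t x) = ∫ x : ℝ, (-((μ : ℂ) * Complex.I)) * H' x := by
          congr 1; funext x; exact hF'eq x
      _ = (-((μ : ℂ) * Complex.I)) * ∫ x : ℝ, H' x := integral_const_mul _ _
      _ = 0 := by rw [hHzero]; ring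
  -- conclude by FTC on [0,1]
  have hkey : ∀ t ∈ Set.uIcc (0:ℝ) 1,
      HasDerivAt (fun t => ∫ x : ℝ, F t x) ((fun _ND : ℝ => (0:ℂ)) t) t := by
    intro t htu
    rw [Set.uIcc_of_le zero_le_one] at htu
    have h := hIcc t htu
    have hmem : t ∈ Set.Ioo (-T) T := ⟨by linarith [htu.1], by linarith [htu.2]⟩
    rwa [hzero t hmem] at h
  have h0 := intervalIntegral.integral_eq_sub_of_hasDerivAt hkey intervalIntegrable_const
  simp only [intervalIntegral.integral_const, smul_zero, sub_zero] at h0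
  have e1 : (∫ x : ℝ, F 1 x)
      = ∫ x : ℝ, ((D : ℂ) + (A : ℂ) * ((x : ℂ) - (μ : ℂ) * Complex.I) ^ 2) ^ (-(p : ℂ)) := by
    rw [hF]; simp
  have e0 : (∫ x : ℝ, F 0 x) = ∫ x : ℝ, ((D : ℂ) + (A : ℂ) * (x : ℂ) ^ 2) ^ (-(p : ℂ)) := by
    rw [hF]; simp
  rw [← e1, ← e0]
  have h1 : (∫ x : ℝ, F 1 x) - (∫ x : ℝ, F 0 x) = 0 := h0.symm
  linear_combination h1

lemma aux_qExp_neg {q r : ℝ} (hq : q ≠ 1) (hrq : r = q - 1) (hr0 : 0 < r) {c : ℝ} (hc : 0 ≤ c) :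
    qExp q (-c) = (1 + r * c) ^ (-(1/r)) := by
  have h1 : (1:ℝ) - q = -r := by rw [hrq]; ring
  rw [qExp, if_neg hq, h1]
  have h2 : 1 + -r * -c = 1 + r * c := by ring
  rw [h2, max_eq_left (by positivity), div_neg, one_div]

lemma aux_qC_eq {q r : ℝ} (hq : q ≠ 1) (hrq : r = q - 1) (hr0 : 0 < r) :
    qC q = ∫ x : ℝ, (1 + r * x ^ 2) ^ (-(1/r)) := by
  rw [qC]
  congr 1
  funext x
  exact aux_qExp_neg hq hrq hr0 (sq_nonneg x)

lemma aux_int_base {r : ℝ} (hr0 : 0 < r) (hr2 : r < 2) :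
    Integrable (fun x : ℝ => (1 + r * x ^ 2) ^ (-(1/r))) := by
  have hs : 1 < 2 * (1/r) := by rw [mul_one_div]; exact (one_lt_div hr0).2 hr2
  exact aux_integrable_rpow hr0 one_pos hs

lemma aux_qC_pos {q r : ℝ} (hq : q ≠ 1) (hrq : r = q - 1) (hr0 : 0 < r) (hr2 : r < 2) :
    0 < qC q := by
  rw [aux_qC_eq hq hrq hr0]
  have hint := aux_int_base hr0 hr2
  have hnn : 0 ≤ᵐ[volume] fun x : ℝ => (1 + r * x ^ 2) ^ (-(1/r)) :=
    Filter.Eventually.of_forall fun x => Real.rpow_nonneg (by positivity) _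
  rw [MeasureTheory.integral_pos_iff_support_of_nonneg_ae hnn hint]
  have hsupp : Function.support (fun x : ℝ => (1 + r * x ^ 2) ^ (-(1/r))) = Set.univ :=
    Set.eq_univ_iff_forall.2 fun x =>
      Function.mem_support.2 (Real.rpow_pos_of_pos (by positivity) _).ne'
  rw [hsupp, Real.volume_univ]
  exact ENNReal.zero_lt_top

lemma aux_scale {A D r : ℝ} (hA : 0 < A) (hD : 0 < D) (hr : 0 < r) :
    ∫ x : ℝ, (D + A * x ^ 2) ^ (-(1/r))
      = Real.sqrt (D * r / A) * D ^ (-(1/r)) * ∫ x : ℝ, (1 + r * x ^ 2) ^ (-(1/r)) := by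
  set a : ℝ := Real.sqrt (D * r / A) with hadef
  have ha : 0 < a := Real.sqrt_pos.2 (by positivity)
  have ha2 : a ^ 2 = D * r / A := Real.sq_sqrt (by positivity)
  have key := MeasureTheory.Measure.integral_comp_mul_left
    (g := fun y : ℝ => (D + A * y ^ 2) ^ (-(1/r))) a
  have hpt : (fun x : ℝ => D ^ (-(1/r)) * (1 + r * x ^ 2) ^ (-(1/r)))
      = fun x : ℝ => (D + A * (a * x) ^ 2) ^ (-(1/r)) := by
    funext x
    have hAa : A * a ^ 2 = D * r := by rw [ha2]; field_simp
    have h1 : D + A * (a * x) ^ 2 = D * (1 + r * x ^ 2) := by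
      calc D + A * (a * x) ^ 2 = D + A * a ^ 2 * x ^ 2 := by ring
        _ = D + D * r * x ^ 2 := by rw [hAa]
        _ = D * (1 + r * x ^ 2) := by ring
    rw [h1, Real.mul_rpow hD.le (by positivity)]
  have key2 : D ^ (-(1/r)) * ∫ x : ℝ, (1 + r * x ^ 2) ^ (-(1/r))
      = a⁻¹ * ∫ y : ℝ, (D + A * y ^ 2) ^ (-(1/r)) := by
    rw [← MeasureTheory.integral_const_mul, hpt]
    rw [key]
    rw [smul_eq_mul, abs_inv, abs_of_pos ha]
  have := congrArg (fun z => a * z) key2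
  rw [← mul_assoc, ← mul_assoc, mul_inv_cancel₀ ha.ne', one_mul] at this
  rw [← this]

lemma aux_qC_one : qC 1 = Real.sqrt π := by
  have h : (fun x : ℝ => qExp 1 (-x ^ 2)) = fun x : ℝ => Real.exp (-1 * x ^ 2) := by
    funext x
    rw [qExp, if_pos rfl]
    ring_nf
  rw [qC, h, integral_gaussian]
  norm_num

/-- Corollary 3: for `1 ≤ q < 3`, `β > 0`, with `q₁ = z(q) = (1+q)/(3-q)` and
`β*(q) = (3-q)/(8β^{2-q}C_q^{2(q-1)})`, one has `F_q[G_q(β; ·)](ξ) = e_{q₁}^{-β*(q)ξ²}`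
and `β*(q) > 0`. -/
theorem qFourier_qGaussian_is_qGaussian (q β q₁ βstar : ℝ) (hq1 : 1 ≤ q) (hq3 : q < 3)
    (hβ : 0 < β) (hq₁ : q₁ = (1 + q) / (3 - q))
    (hβstar : βstar = (3 - q) / (8 * β ^ (2 - q) * qC q ^ (2 * (q - 1)))) :
    (∀ ξ : ℝ, qFourier q (qGaussian q β) ξ = ((qExp q₁ (-(βstar * ξ ^ 2)) : ℝ) : ℂ)) ∧
      0 < βstar := by
  rcases eq_or_lt_of_le hq1 with hq | hq
  · -- q = 1 : classical Gaussian case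
    subst hq
    have hq₁1 : q₁ = 1 := by rw [hq₁]; norm_num
    subst hq₁1
    have hC1 : qC 1 = Real.sqrt π := aux_qC_one
    have hβs : βstar = 1 / (4 * β) := by
      have e1 : (2:ℝ) - 1 = 1 := by norm_num
      have e2 : 2 * ((1:ℝ) - 1) = 0 := by norm_num
      rw [hβstar, e1, e2, Real.rpow_one, Real.rpow_zero]
      field_simp
      ring
    subst hβs
    have hπ : 0 < Real.sqrt π := Real.sqrt_pos.2 Real.pi_pos
    have hsβ : 0 < Real.sqrt β := Real.sqrt_pos.2 hβ
    constructor
    · intro ξ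
      have hsub : (1:ℝ) - 1 = 0 := by norm_num
      have hG : ∀ x : ℝ, qGaussian 1 β x
          = Real.sqrt β / Real.sqrt π * Real.exp (-(β * x ^ 2)) := by
        intro x; rw [qGaussian, hC1, qExp, if_pos rfl]
      have hpt : ∀ x : ℝ, (qGaussian 1 β x : ℂ) *
          qExpC 1 (Complex.I * x * ξ * ((qGaussian 1 β x ^ ((1:ℝ) - 1) : ℝ) : ℂ))
          = ((Real.sqrt β / Real.sqrt π : ℝ) : ℂ) *
            (Complex.exp (Complex.I * (ξ:ℂ) * (x:ℂ)) *
              Complex.exp (-(β:ℂ) * (x:ℂ) ^ 2)) := by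
        intro x
        rw [hG x, hsub, Real.rpow_zero, qExpC, if_pos rfl, Complex.ofReal_one, mul_one]
        rw [Complex.ofReal_mul, Complex.ofReal_exp]
        rw [show ((-(β * x ^ 2) : ℝ) : ℂ) = -(β:ℂ) * (x:ℂ) ^ 2 by push_cast; ring]
        rw [show Complex.I * (x:ℂ) * (ξ:ℂ) = Complex.I * (ξ:ℂ) * (x:ℂ) by ring]
        ring
      rw [qFourier]
      rw [show (fun x : ℝ => (qGaussian 1 β x : ℂ) *
          qExpC 1 (Complex.I * x * ξ * ((qGaussian 1 β x ^ ((1:ℝ) - 1) : ℝ) : ℂ)))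
          = fun x : ℝ => ((Real.sqrt β / Real.sqrt π : ℝ) : ℂ) *
            (Complex.exp (Complex.I * (ξ:ℂ) * (x:ℂ)) *
              Complex.exp (-(β:ℂ) * (x:ℂ) ^ 2)) from funext hpt]
      rw [MeasureTheory.integral_const_mul]
      rw [fourierIntegral_gaussian (by simpa using hβ) (ξ:ℂ)]
      have h1 : ((π:ℂ) / (β:ℂ)) ^ ((1:ℂ)/2) = ((Real.sqrt (π/β) : ℝ) : ℂ) := by
        rw [show ((π:ℂ) / (β:ℂ)) = ((π/β : ℝ) : ℂ) by push_cast; ring,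
          show ((1:ℂ)/2) = (((1/2 : ℝ)) : ℂ) by norm_num,
          ← Complex.ofReal_cpow (by positivity) (1/2 : ℝ)]
        congr 1
        rw [Real.sqrt_eq_rpow]
      rw [h1, qExp, if_pos rfl]
      rw [show (-(ξ:ℂ) ^ 2 / (4 * (β:ℂ))) = ((-(1/(4*β) * ξ^2) : ℝ) : ℂ) by
        push_cast; ring]
      rw [← Complex.ofReal_exp, ← Complex.ofReal_mul, ← Complex.ofReal_mul]
      congr 1
      rw [Real.sqrt_div Real.pi_pos.le]
      field_simp
    · positivity
  · -- 1 < q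
    have hqne : q ≠ 1 := by intro h; rw [h] at hq; exact lt_irrefl _ hq
    have hr0 : 0 < q - 1 := by linarith
    have hr2 : q - 1 < 2 := by linarith
    set r : ℝ := q - 1 with hrdef
    have hs2 : 1 < 2 * (1/r) := by rw [mul_one_div]; exact (one_lt_div hr0).2 hr2
    have hrne : r ≠ 0 := ne_of_gt hr0
    have hC : 0 < qC q := aux_qC_pos hqne hrdef hr0 hr2
    set C : ℝ := qC q with hCdef
    set c : ℝ := Real.sqrt β / C with hcdef
    have hsβ : 0 < Real.sqrt β := Real.sqrt_pos.2 hβ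
    have hc : 0 < c := div_pos hsβ hC
    have hβpos : 0 < βstar := by
      rw [hβstar]
      have h1 : 0 < β ^ (2 - q) := Real.rpow_pos_of_pos hβ _
      have h2 : 0 < C ^ (2 * r) := Real.rpow_pos_of_pos hC _
      have h3 : 0 < 3 - q := by linarith
      positivity
    refine ⟨fun ξ => ?_, hβpos⟩
    set k : ℝ := r * c ^ r * ξ with hkdef
    set A : ℝ := r * β with hAdef
    have hA : 0 < A := by rw [hAdef]; positivity
    set μ : ℝ := k / (2 * A) with hμdef
    set D : ℝ := 1 + A * μ ^ 2 with hDdef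
    have hD : 0 < D := by rw [hDdef]; positivity
    have hμD : A * μ ^ 2 < D := by rw [hDdef]; linarith
    have hpoint : ∀ x : ℝ, (qGaussian q β x : ℂ) *
        qExpC q (Complex.I * x * ξ * ((qGaussian q β x ^ (q - 1) : ℝ) : ℂ))
        = (c : ℂ) * ((D:ℂ) + (A:ℂ) * ((x:ℂ) - (μ:ℂ) * Complex.I) ^ 2) ^ ((-(1/r) : ℝ) : ℂ) := by
      intro x
      set u : ℝ := 1 + r * (β * x ^ 2) with hudef
      have hu : 0 < u := by rw [hudef]; positivity
      have hG : qGaussian q β x = c * u ^ (-(1/r)) := by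
        rw [qGaussian, aux_qExp_neg hqne hrdef hr0 (by positivity : (0:ℝ) ≤ β * x ^ 2)]
      have hGr : qGaussian q β x ^ (q - 1) = c ^ r * u⁻¹ := by
        rw [hG, ← hrdef, Real.mul_rpow hc.le (Real.rpow_nonneg hu.le _),
          ← Real.rpow_mul hu.le]
        congr 1
        rw [show -(1/r) * r = -1 by field_simp, Real.rpow_neg_one]
      rw [hGr, hG, qExpC, if_neg hqne]
      have hq2 : (1:ℂ) - (q:ℂ) = -(r:ℂ) := by rw [hrdef]; push_cast; ring
      have hP : (1:ℂ) + (1 - (q:ℂ)) * (Complex.I * x * ξ * ((c ^ r * u⁻¹ : ℝ) : ℂ))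
          = ((u⁻¹ : ℝ) : ℂ) * (((u : ℝ) : ℂ) - Complex.I * (k : ℝ) * (x : ℂ)) := by
        rw [hq2, hkdef]
        push_cast
        have huC : (u : ℂ) ≠ 0 := Complex.ofReal_ne_zero.2 hu.ne'
        field_simp
        ring
      have hPne : (((u : ℝ) : ℂ) - Complex.I * (k : ℂ) * (x : ℂ)) ≠ 0 := by
        intro h
        have h2 := congrArg Complex.re h
        simp [Complex.sub_re, Complex.mul_re, Complex.mul_im] at h2
        exact hu.ne' h2
      have hexpC : (1:ℂ) / (1 - (q:ℂ)) = ((-(1/r) : ℝ) : ℂ) := by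
        rw [hq2]
        push_cast
        rw [div_neg]
      rw [hP, hexpC]
      rw [aux_ofReal_mul_cpow (inv_pos.2 hu) hPne]
      rw [← Complex.ofReal_cpow (inv_nonneg.2 hu.le)]
      have hiu : (u⁻¹) ^ (-(1/r)) = u ^ (1/r) := by
        rw [Real.inv_rpow hu.le, Real.rpow_neg hu.le, inv_inv]
      rw [hiu]
      have hPD : (((u : ℝ) : ℂ) - Complex.I * (k : ℂ) * (x : ℂ))
          = (D:ℂ) + (A:ℂ) * ((x:ℂ) - (μ:ℂ) * Complex.I) ^ 2 := by
        have hk2 : k = 2 * A * μ := by rw [hμdef]; field_simp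
        have hu' : u = 1 + A * x ^ 2 := by rw [hudef, hAdef]; ring
        rw [hu', hk2, hDdef]
        push_cast
        linear_combination (-(A:ℂ) * (μ:ℂ) ^ 2) * Complex.I_sq
      rw [hPD]
      rw [Complex.ofReal_mul]
      have h9 : ((u ^ (-(1/r)) : ℝ) : ℂ) * ((u ^ (1/r) : ℝ) : ℂ) = 1 := by
        rw [← Complex.ofReal_mul, ← Real.rpow_add hu]
        norm_num
      set Q : ℂ := ((D:ℂ) + (A:ℂ) * ((x:ℂ) - (μ:ℂ) * Complex.I) ^ 2) ^ ((-(1/r) : ℝ) : ℂ)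
        with hQdef
      calc ((c : ℝ) : ℂ) * ((u ^ (-(1/r)) : ℝ) : ℂ) * (((u ^ (1/r) : ℝ) : ℂ) * Q)
          = ((c : ℝ) : ℂ) * ((((u ^ (-(1/r)) : ℝ) : ℂ) * ((u ^ (1/r) : ℝ) : ℂ)) * Q) := by
            ring
        _ = (c : ℂ) * Q := by rw [h9, one_mul]
    rw [qFourier]
    rw [show (fun x : ℝ => (qGaussian q β x : ℂ) * qExpC q (Complex.I * x * ξ *
        ((qGaussian q β x ^ (q - 1) : ℝ) : ℂ))) = fun x : ℝ =>
        (c : ℂ) * ((D:ℂ) + (A:ℂ) * ((x:ℂ) - (μ:ℂ) * Complex.I) ^ 2) ^ ((-(1/r) : ℝ) : ℂ)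
        from funext hpoint]
    rw [MeasureTheory.integral_const_mul]
    have hecast : ((-(1/r) : ℝ) : ℂ) = -(((1/r : ℝ)) : ℂ) := by push_cast; ring
    simp only [hecast]
    rw [aux_shift hA hD hs2 μ hμD]
    have hpt2 : (fun x : ℝ => ((D:ℂ) + (A:ℂ) * (x:ℂ) ^ 2) ^ (-(((1/r : ℝ)) : ℂ)))
        = fun x : ℝ => (((D + A * x ^ 2) ^ (-(1/r)) : ℝ) : ℂ) := by
      funext x
      rw [show ((D:ℂ) + (A:ℂ) * (x:ℂ) ^ 2) = (((D + A * x ^ 2 : ℝ)) : ℂ) by push_cast; ring]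
      rw [Complex.ofReal_cpow (by positivity : (0:ℝ) ≤ D + A * x ^ 2)]
      rw [hecast]
    rw [hpt2]
    rw [show (∫ x : ℝ, (((D + A * x ^ 2) ^ (-(1/r)) : ℝ) : ℂ))
        = (((∫ x : ℝ, (D + A * x ^ 2) ^ (-(1/r)) : ℝ)) : ℂ) from integral_ofReal]
    rw [aux_scale hA hD hr0, ← aux_qC_eq hqne hrdef hr0, ← hCdef]
    rw [← Complex.ofReal_mul]
    congr 1
    -- now a purely real computation
    have hDrA : D * r / A = D / β := by rw [hAdef]; field_simp
    have hq₁gt : 1 < q₁ := by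
      rw [hq₁, lt_div_iff₀ (by linarith : (0:ℝ) < 3 - q)]; linarith
    have hq₁ne : q₁ ≠ 1 := ne_of_gt hq₁gt
    have h2q : (2:ℝ) - q = 1 - r := by rw [hrdef]; ring
    have h3q : (3:ℝ) - q = 2 - r := by rw [hrdef]; ring
    have hβstar' : βstar = (2 - r) / (8 * β ^ (1 - r) * C ^ (2 * r)) := by
      rw [hβstar, h3q, h2q]
    have hq₁r : 1 - q₁ = -(2 * r) / (2 - r) := by
      rw [hq₁, hrdef, show (2:ℝ) - (q - 1) = 3 - q from by ring]
      have h1 : (3:ℝ) - q ≠ 0 := by linarith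
      field_simp
      ring
    have hβ1r : 0 < β ^ (1 - r) := Real.rpow_pos_of_pos hβ _
    have hC2r : 0 < C ^ (2 * r) := Real.rpow_pos_of_pos hC _
    have hsq1 : (Real.sqrt β ^ r) ^ 2 = β ^ r := by
      rw [sq, ← Real.rpow_add hsβ, Real.sqrt_eq_rpow, ← Real.rpow_mul hβ.le]
      congr 1
      ring
    have hsq2 : (C ^ r) ^ 2 = C ^ (2 * r) := by
      rw [sq, ← Real.rpow_add hC]
      congr 1
      ring
    have hcr2 : (c ^ r) ^ 2 = β ^ r / C ^ (2 * r) := by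
      rw [hcdef, Real.div_rpow (Real.sqrt_nonneg β) hC.le, div_pow, hsq1, hsq2]
    have hAμ2 : A * μ ^ 2 = r * ((c ^ r) ^ 2 * ξ ^ 2) / (4 * β) := by
      rw [hμdef, hkdef, hAdef]
      field_simp
      ring
    have hββ : β ^ (1 - r) * β ^ r = β := by
      rw [← Real.rpow_add hβ]
      norm_num
    have hrne2 : (2:ℝ) - r ≠ 0 := by linarith
    have hinner : 1 + (1 - q₁) * (-(βstar * ξ ^ 2)) = D := by
      rw [hq₁r, hβstar', hDdef, hAμ2, hcr2]
      field_simp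
      linear_combination (-(8 * r * ξ ^ 2)) * hββ
    have hexpo : 1 / (1 - q₁) = 1/2 - 1/r := by
      rw [hq₁r]
      field_simp
      ring
    rw [qExp, if_neg hq₁ne, hinner, max_eq_left hD.le, hexpo]
    rw [hDrA, hcdef, Real.sqrt_div hD.le, Real.sqrt_eq_rpow D]
    rw [show (1:ℝ)/2 - 1/r = 1/2 + -(1/r) by ring, Real.rpow_add hD]
    field_simp
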